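/- arXiv:1002.3682 — 5 statements merged into one kernel-verified Lean document; each statement's English description precedes it below -/
import Mathlib

section
/- Let a, b, t be positive real numbers. Then ∫₀ᵗ (2π(t−m))^{−1/2} e^{−a²/(2(t−m))} · b·(2π)^{−1/2}·m^{−3/2}·e^{−b²/(2m)} dm = (2πt)^{−1/2} e^{−(a+b)²/(2t)}. Equivalently, writing p_s(x) := (2πs)^{−1/2} e^{−x²/(2s)} for the centered Gaussian density with variance s and p′_s its derivative in x, ∫₀ᵗ p_{t−m}(a)·(−p′_m(b)) dm = p_t(a+b). -/
open MeasureTheory Real Set Filter Topology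

namespace Stmt4Aux

noncomputable def w (t s : ℝ) : ℝ := Real.sqrt (s*(t-s))
noncomputable def g1 (a b t s : ℝ) : ℝ := ((a+b)*s - b*t) / w t s
noncomputable def g2 (a b t s : ℝ) : ℝ := (a*s + b*(t-s)) / w t s

lemma w_pos {t s : ℝ} (hs : s ∈ Ioo 0 t) : 0 < w t s := by
  have h1 := hs.1; have h2 := hs.2
  apply Real.sqrt_pos.2; nlinarith

lemma w_sq {t s : ℝ} (hs : s ∈ Ioo 0 t) : w t s ^ 2 = s*(t-s) := by
  have h1 := hs.1; have h2 := hs.2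
  apply Real.sq_sqrt; nlinarith

lemma w_hasDerivAt {t s : ℝ} (hs : s ∈ Ioo 0 t) :
    HasDerivAt (w t) ((t - 2*s) / (2 * w t s)) s := by
  have h1 := hs.1; have h2 := hs.2
  have hne : s * (t-s) ≠ 0 := by nlinarith
  have hp : HasDerivAt (fun s => s*(t-s)) (t - 2*s) s := by
    have := (hasDerivAt_id s).mul ((hasDerivAt_const s t).sub (hasDerivAt_id s))
    refine this.congr_deriv ?_; simp; ring
  have := (Real.hasDerivAt_sqrt hne).comp s hp
  refine this.congr_deriv ?_
  field_simp [w]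
  unfold w; ring

lemma g1_hasDerivAt {a b t s : ℝ} (hs : s ∈ Ioo 0 t) :
    HasDerivAt (g1 a b t) (t * (a*s + b*(t-s)) / (2 * w t s ^ 3)) s := by
  have hw := w_pos hs
  have hw2 := w_sq hs
  have hnum : HasDerivAt (fun s => (a+b)*s - b*t) (a+b) s := by
    simpa using ((hasDerivAt_id s).const_mul (a+b)).sub_const (b*t)
  have := hnum.div (w_hasDerivAt hs) (ne_of_gt hw)
  refine this.congr_deriv ?_
  field_simp
  linear_combination (2*(a+b)) * hw2

lemma g2_hasDerivAt {a b t s : ℝ} (hs : s ∈ Ioo 0 t) :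
    HasDerivAt (g2 a b t) (t * ((a+b)*s - b*t) / (2 * w t s ^ 3)) s := by
  have hw := w_pos hs
  have hw2 := w_sq hs
  have hnum : HasDerivAt (fun s => a*s + b*(t-s)) (a - b) s := by
    have := ((hasDerivAt_id s).const_mul a).add
      (((hasDerivAt_const s t).sub (hasDerivAt_id s)).const_mul b)
    refine this.congr_deriv ?_; simp; ring
  have := hnum.div (w_hasDerivAt hs) (ne_of_gt hw)
  refine this.congr_deriv ?_
  field_simp
  linear_combination (2*(a-b)) * hw2

noncomputable def Phi (t x : ℝ) : ℝ := ∫ u in (0:ℝ)..x, Real.exp (-u^2/(2*t))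

lemma Phi_hasDerivAt (t x : ℝ) : HasDerivAt (Phi t) (Real.exp (-x^2/(2*t))) x := by
  have hc : Continuous fun u : ℝ => Real.exp (-u^2/(2*t)) := by continuity
  exact (hc.integral_hasStrictDerivAt 0 x).hasDerivAt

lemma gauss_eq (t : ℝ) : (fun u : ℝ => Real.exp (-u^2/(2*t)))
    = fun u : ℝ => Real.exp (-(1/(2*t)) * u^2) := by funext u; ring_nf

lemma gauss_integrable (t : ℝ) (ht : 0 < t) :
    Integrable (fun u : ℝ => Real.exp (-u^2/(2*t))) := by
  rw [gauss_eq]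
  exact integrable_exp_neg_mul_sq (by positivity)

lemma gauss_Ioi (t : ℝ) (ht : 0 < t) :
    (∫ u in Ioi (0:ℝ), Real.exp (-u^2/(2*t))) = Real.sqrt (2*π*t)/2 := by
  rw [gauss_eq, integral_gaussian_Ioi]
  congr 2
  rw [div_div_eq_mul_div, div_eq_iff (by positivity)]
  ring

lemma gauss_Iic (t : ℝ) (ht : 0 < t) :
    (∫ u in Iic (0:ℝ), Real.exp (-u^2/(2*t))) = Real.sqrt (2*π*t)/2 := by
  rw [← gauss_Ioi t ht]
  have := integral_comp_neg_Ioi (0:ℝ) (fun u : ℝ => Real.exp (-u^2/(2*t)))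
  simp only [neg_zero, neg_sq] at this
  rw [← this]

lemma Phi_tendsto_atTop (t : ℝ) (ht : 0 < t) :
    Tendsto (Phi t) atTop (𝓝 (Real.sqrt (2*π*t)/2)) := by
  have := intervalIntegral_tendsto_integral_Ioi 0
    ((gauss_integrable t ht).integrableOn) tendsto_id
  rwa [gauss_Ioi t ht] at this

lemma Phi_tendsto_atBot (t : ℝ) (ht : 0 < t) :
    Tendsto (Phi t) atBot (𝓝 (-(Real.sqrt (2*π*t)/2))) := by
  have h := intervalIntegral_tendsto_integral_Iic 0
    ((gauss_integrable t ht).integrableOn) tendsto_id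
  rw [gauss_Iic t ht] at h
  have : Phi t = fun x => -(∫ u in x..(0:ℝ), Real.exp (-u^2/(2*t))) := by
    funext x; rw [Phi, intervalIntegral.integral_symm]
  rw [this]
  exact h.neg

noncomputable def G (a b t s : ℝ) : ℝ :=
  if s ≤ 0 then -(Real.sqrt (2*π*t)/2) - Real.exp (2*a*b/t) * (Real.sqrt (2*π*t)/2)
  else if t ≤ s then Real.sqrt (2*π*t)/2 - Real.exp (2*a*b/t) * (Real.sqrt (2*π*t)/2)
  else Phi t (g1 a b t s) - Real.exp (2*a*b/t) * Phi t (g2 a b t s)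

lemma G_eq_on_Ioo {a b t s : ℝ} (hs : s ∈ Ioo 0 t) :
    G a b t s = Phi t (g1 a b t s) - Real.exp (2*a*b/t) * Phi t (g2 a b t s) := by
  rw [G, if_neg (not_le.2 hs.1), if_neg (not_le.2 hs.2)]

lemma g_sq_diff {a b t s : ℝ} (hs : s ∈ Ioo 0 t) :
    (g2 a b t s)^2 = (g1 a b t s)^2 + 4*a*b := by
  have hw := w_pos hs
  have hw2 := w_sq hs
  have h1 := hs.1; have h2 := hs.2
  have hne : s*(t-s) ≠ 0 := by nlinarith
  rw [g1, g2, div_pow, div_pow, hw2]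
  field_simp [hne]
  ring

lemma exp_g_identity {a b t s : ℝ} (ht : 0 < t) (hs : s ∈ Ioo 0 t) :
    Real.exp (2*a*b/t) * Real.exp (-(g2 a b t s)^2/(2*t)) = Real.exp (-(g1 a b t s)^2/(2*t)) := by
  rw [← Real.exp_add, g_sq_diff hs]
  congr 1
  field_simp
  ring

lemma G_hasDerivAt {a b t s : ℝ} (ht : 0 < t) (hs : s ∈ Ioo 0 t) :
    HasDerivAt (G a b t)
      (Real.exp (-(g1 a b t s)^2/(2*t)) * (t * b * (t-s) / (w t s ^ 3))) s := by
  have hw := w_pos hs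
  have h1 : HasDerivAt (fun x => Phi t (g1 a b t x))
      (Real.exp (-(g1 a b t s)^2/(2*t)) * (t * (a*s + b*(t-s)) / (2 * w t s ^ 3))) s :=
    (Phi_hasDerivAt t (g1 a b t s)).comp s (g1_hasDerivAt hs)
  have h2 : HasDerivAt (fun x => Real.exp (2*a*b/t) * Phi t (g2 a b t x))
      (Real.exp (2*a*b/t) * (Real.exp (-(g2 a b t s)^2/(2*t)) *
        (t * ((a+b)*s - b*t) / (2 * w t s ^ 3)))) s :=
    ((Phi_hasDerivAt t (g2 a b t s)).comp s (g2_hasDerivAt hs)).const_mul _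
  have h3 := h1.sub h2
  have heq : G a b t =ᶠ[𝓝 s] fun x => Phi t (g1 a b t x)
      - Real.exp (2*a*b/t) * Phi t (g2 a b t x) := by
    filter_upwards [Ioo_mem_nhds hs.1 hs.2] with x hx
    exact G_eq_on_Ioo hx
  refine (h3.congr_of_eventuallyEq heq).congr_deriv ?_
  rw [← mul_assoc (Real.exp (2*a*b/t)), exp_g_identity ht hs]
  rw [← mul_sub]
  congr 1
  field_simp
  ring

section limits

variable {a b t : ℝ}

lemma w_inv_tendsto {s₀ : ℝ} {S : Set ℝ} (hS : ∀ᶠ x in 𝓝[S] s₀, x ∈ Ioo 0 t)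
    (hw0 : s₀ * (t - s₀) = 0) :
    Tendsto (fun s => (w t s)⁻¹) (𝓝[S] s₀) atTop := by
  apply tendsto_inv_nhdsGT_zero.comp
  rw [tendsto_nhdsWithin_iff]
  constructor
  · have hc : Continuous (w t) := by
      unfold w; continuity
    have h0 : w t s₀ = 0 := by rw [w, hw0, Real.sqrt_zero]
    have := (hc.tendsto s₀).mono_left
      (nhdsWithin_le_nhds : 𝓝[S] s₀ ≤ 𝓝 s₀)
    rwa [h0] at this
  · filter_upwards [hS] with x hx
    exact w_pos hx

lemma div_w_tendsto_atTop {s₀ : ℝ} {S : Set ℝ} (hS : ∀ᶠ x in 𝓝[S] s₀, x ∈ Ioo 0 t)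
    (hw0 : s₀ * (t - s₀) = 0) {u : ℝ → ℝ} (hu : Continuous u) (hpos : 0 < u s₀) :
    Tendsto (fun s => u s / w t s) (𝓝[S] s₀) atTop := by
  have hnum : Tendsto u (𝓝[S] s₀) (𝓝 (u s₀)) :=
    (hu.tendsto s₀).mono_left (nhdsWithin_le_nhds : 𝓝[S] s₀ ≤ 𝓝 s₀)
  have := hnum.pos_mul_atTop hpos (w_inv_tendsto hS hw0)
  simpa [div_eq_mul_inv] using this

lemma div_w_tendsto_atBot {s₀ : ℝ} {S : Set ℝ} (hS : ∀ᶠ x in 𝓝[S] s₀, x ∈ Ioo 0 t)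
    (hw0 : s₀ * (t - s₀) = 0) {u : ℝ → ℝ} (hu : Continuous u) (hneg : u s₀ < 0) :
    Tendsto (fun s => u s / w t s) (𝓝[S] s₀) atBot := by
  have hnum : Tendsto u (𝓝[S] s₀) (𝓝 (u s₀)) :=
    (hu.tendsto s₀).mono_left (nhdsWithin_le_nhds : 𝓝[S] s₀ ≤ 𝓝 s₀)
  have := hnum.neg_mul_atTop hneg (w_inv_tendsto hS hw0)
  simpa [div_eq_mul_inv] using this

lemma ev_left (ht : 0 < t) : ∀ᶠ x in 𝓝[Ioc 0 t] (0:ℝ), x ∈ Ioo 0 t := by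
  filter_upwards [self_mem_nhdsWithin,
    (eventually_lt_nhds ht).filter_mono (nhdsWithin_le_nhds : 𝓝[Ioc 0 t] (0:ℝ) ≤ 𝓝 0)]
    with x hx hx'
  exact ⟨hx.1, hx'⟩

lemma ev_right (ht : 0 < t) : ∀ᶠ x in 𝓝[Ico 0 t] t, x ∈ Ioo 0 t := by
  filter_upwards [self_mem_nhdsWithin,
    (eventually_gt_nhds ht).filter_mono (nhdsWithin_le_nhds : 𝓝[Ico 0 t] t ≤ 𝓝 t)]
    with x hx hx'
  exact ⟨hx', hx.2⟩

lemma G_tendsto_left (ha : 0 < a) (hb : 0 < b) (ht : 0 < t) :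
    Tendsto (G a b t) (𝓝[Ioc 0 t] 0) (𝓝 (G a b t 0)) := by
  have hg1 : Tendsto (g1 a b t) (𝓝[Ioc 0 t] 0) atBot := by
    apply div_w_tendsto_atBot (ev_left ht) (by ring) (by continuity)
    simp; nlinarith
  have hg2 : Tendsto (g2 a b t) (𝓝[Ioc 0 t] 0) atTop := by
    apply div_w_tendsto_atTop (ev_left ht) (by ring) (by continuity)
    simp; nlinarith
  have hmain : Tendsto (fun x => Phi t (g1 a b t x) - Real.exp (2*a*b/t) * Phi t (g2 a b t x))
      (𝓝[Ioc 0 t] 0) (𝓝 (-(Real.sqrt (2*π*t)/2) - Real.exp (2*a*b/t) * (Real.sqrt (2*π*t)/2))) :=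
    ((Phi_tendsto_atBot t ht).comp hg1).sub
      (((Phi_tendsto_atTop t ht).comp hg2).const_mul _)
  have hG0 : G a b t 0 = -(Real.sqrt (2*π*t)/2) - Real.exp (2*a*b/t) * (Real.sqrt (2*π*t)/2) := by
    rw [G, if_pos le_rfl]
  rw [hG0]
  apply hmain.congr'
  filter_upwards [ev_left ht] with x hx
  exact (G_eq_on_Ioo hx).symm

lemma G_tendsto_right (ha : 0 < a) (hb : 0 < b) (ht : 0 < t) :
    Tendsto (G a b t) (𝓝[Ico 0 t] t) (𝓝 (G a b t t)) := by
  have hg1 : Tendsto (g1 a b t) (𝓝[Ico 0 t] t) atTop := by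
    apply div_w_tendsto_atTop (ev_right ht) (by ring) (by continuity)
    simp; nlinarith
  have hg2 : Tendsto (g2 a b t) (𝓝[Ico 0 t] t) atTop := by
    apply div_w_tendsto_atTop (ev_right ht) (by ring) (by continuity)
    simp; nlinarith
  have hmain : Tendsto (fun x => Phi t (g1 a b t x) - Real.exp (2*a*b/t) * Phi t (g2 a b t x))
      (𝓝[Ico 0 t] t) (𝓝 (Real.sqrt (2*π*t)/2 - Real.exp (2*a*b/t) * (Real.sqrt (2*π*t)/2))) :=
    ((Phi_tendsto_atTop t ht).comp hg1).sub
      (((Phi_tendsto_atTop t ht).comp hg2).const_mul _)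
  have hGt : G a b t t = Real.sqrt (2*π*t)/2 - Real.exp (2*a*b/t) * (Real.sqrt (2*π*t)/2) := by
    rw [G, if_neg (not_le.2 ht), if_pos le_rfl]
  rw [hGt]
  apply hmain.congr'
  filter_upwards [ev_right ht] with x hx
  exact (G_eq_on_Ioo hx).symm

lemma G_continuousOn (ha : 0 < a) (hb : 0 < b) (ht : 0 < t) :
    ContinuousOn (G a b t) (Icc 0 t) := by
  intro x hx
  rcases hx.1.eq_or_lt with h0 | h0
  · rw [← h0]
    rw [show Icc (0:ℝ) t = insert 0 (Ioc 0 t) from (Set.Ioc_insert_left ht.le).symm,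
      continuousWithinAt_insert_self]
    exact G_tendsto_left ha hb ht
  rcases eq_or_lt_of_le hx.2 with h1 | h1
  · rw [h1]
    rw [show Icc (0:ℝ) t = insert t (Ico 0 t) from (Set.Ico_insert_right ht.le).symm,
      continuousWithinAt_insert_self]
    exact G_tendsto_right ha hb ht
  · have hxIoo : x ∈ Ioo 0 t := ⟨h0, h1⟩
    exact ((G_hasDerivAt ht hxIoo).continuousAt).continuousWithinAt

end limits

lemma contP (c e : ℝ) (hc : 0 < c) (he : 0 < e) :
    ContinuousOn (fun r : ℝ => r ^ (-e) * Real.exp (-c/r)) (Ici 0) := by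
  intro r hr
  rcases (show (0:ℝ) ≤ r from hr).eq_or_lt with h0 | h0
  · have hval : (0:ℝ) ^ (-e) * Real.exp (-c/0) = 0 := by
      rw [Real.zero_rpow (by simpa using he.ne')]; ring
    rw [← h0]
    rw [show Ici (0:ℝ) = insert 0 (Ioi 0) from Set.Ioi_insert.symm,
      continuousWithinAt_insert_self]
    rw [ContinuousWithinAt, hval]
    have key := (tendsto_rpow_mul_exp_neg_mul_atTop_nhds_zero e c hc).comp
      tendsto_inv_nhdsGT_zero
    apply key.congr'
    filter_upwards [self_mem_nhdsWithin] with x (hx : 0 < x)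
    simp only [Function.comp]
    rw [Real.inv_rpow hx.le, ← Real.rpow_neg hx.le, neg_mul, ← div_eq_mul_inv, neg_div]
  · have c1 : ContinuousAt (fun x : ℝ => x ^ (-e)) r :=
      Real.continuousAt_rpow_const r (-e) (Or.inl h0.ne')
    have c2 : ContinuousAt (fun x : ℝ => -c/x) r :=
      continuousAt_const.div continuousAt_id h0.ne'
    have c3 : ContinuousAt (fun x : ℝ => Real.exp (-c/x)) r :=
      Real.continuous_exp.continuousAt.comp c2
    exact (c1.mul c3).continuousWithinAt

lemma rpow_neg_half_eq {x : ℝ} (hx : 0 < x) : x ^ (-(1/2):ℝ) = (Real.sqrt x)⁻¹ := by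
  rw [Real.rpow_neg hx.le, Real.sqrt_eq_rpow]

lemma rpow_neg_threehalf_eq {x : ℝ} (hx : 0 < x) : x ^ (-(3/2):ℝ) = (x * Real.sqrt x)⁻¹ := by
  rw [Real.rpow_neg hx.le]
  congr 1
  rw [show (3/2:ℝ) = 1 + 1/2 by norm_num, Real.rpow_add hx, Real.rpow_one, Real.sqrt_eq_rpow]

lemma integrand_eq {a b t m : ℝ} (ha : 0 < a) (hb : 0 < b) (ht : 0 < t) (hm : m ∈ Ioo 0 t) :
    (2 * π * (t - m)) ^ (-(1 / 2 : ℝ)) * Real.exp (-a ^ 2 / (2 * (t - m))) *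
      (b * (2 * π) ^ (-(1 / 2 : ℝ)) * m ^ (-(3 / 2 : ℝ)) * Real.exp (-b ^ 2 / (2 * m)))
    = ((2*π*t)⁻¹ * Real.exp (-(a+b)^2/(2*t))) *
      (Real.exp (-(g1 a b t m)^2/(2*t)) * (t * b * (t-m) / (w t m ^ 3))) := by
  have hm1 := hm.1
  have hm2 : 0 < t - m := by linarith [hm.2]
  have hπ : (0:ℝ) < 2*π := by positivity
  have hw := w_pos hm
  have hw2 := w_sq hm
  -- exponential identity
  have hexp : Real.exp (-a ^ 2 / (2 * (t - m))) * Real.exp (-b ^ 2 / (2 * m))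
      = Real.exp (-(a+b)^2/(2*t)) * Real.exp (-(g1 a b t m)^2/(2*t)) := by
    rw [← Real.exp_add, ← Real.exp_add]
    congr 1
    rw [g1, div_pow, hw2]
    field_simp
    ring
  -- algebraic identity
  have halg : (2 * π * (t - m)) ^ (-(1 / 2 : ℝ)) *
      (b * (2 * π) ^ (-(1 / 2 : ℝ)) * m ^ (-(3 / 2 : ℝ)))
      = (2*π*t)⁻¹ * (t * b * (t-m) / (w t m ^ 3)) := by
    have e1 : Real.sqrt (2*π*(t-m)) = Real.sqrt (2*π) * Real.sqrt (t-m) :=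
      Real.sqrt_mul (by positivity) _
    have ew : w t m = Real.sqrt m * Real.sqrt (t-m) := by
      rw [w, Real.sqrt_mul hm1.le]
    rw [rpow_neg_half_eq (by positivity), rpow_neg_half_eq hπ, rpow_neg_threehalf_eq hm1,
      e1, ew]
    have hq2 : Real.sqrt m ^ 2 = m := Real.sq_sqrt hm1.le
    have hr2 : Real.sqrt (t-m) ^ 2 = t - m := Real.sq_sqrt hm2.le
    have hp2 : Real.sqrt (2*π) ^ 2 = 2*π := Real.sq_sqrt hπ.le
    have hq : 0 < Real.sqrt m := Real.sqrt_pos.2 hm1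
    have hr : 0 < Real.sqrt (t-m) := Real.sqrt_pos.2 hm2
    have hp : 0 < Real.sqrt (2*π) := Real.sqrt_pos.2 hπ
    have h3 : (Real.sqrt m * Real.sqrt (t-m))^3
        = (m * Real.sqrt m) * ((t-m) * Real.sqrt (t-m)) := by
      rw [mul_pow, show Real.sqrt m ^ 3 = m * Real.sqrt m by rw [pow_succ, hq2],
        show Real.sqrt (t-m) ^ 3 = (t-m) * Real.sqrt (t-m) by rw [pow_succ, hr2]]
    rw [h3, show 2*π = Real.sqrt (2*π)^2 from hp2.symm]
    field_simp
    ring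
    rw [Real.sq_sqrt (by positivity), Real.sq_sqrt (by positivity)]
  calc (2 * π * (t - m)) ^ (-(1 / 2 : ℝ)) * Real.exp (-a ^ 2 / (2 * (t - m))) *
      (b * (2 * π) ^ (-(1 / 2 : ℝ)) * m ^ (-(3 / 2 : ℝ)) * Real.exp (-b ^ 2 / (2 * m)))
      = ((2 * π * (t - m)) ^ (-(1 / 2 : ℝ)) *
          (b * (2 * π) ^ (-(1 / 2 : ℝ)) * m ^ (-(3 / 2 : ℝ)))) *
        (Real.exp (-a ^ 2 / (2 * (t - m))) * Real.exp (-b ^ 2 / (2 * m))) := by ring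
    _ = ((2*π*t)⁻¹ * (t * b * (t-m) / (w t m ^ 3))) *
        (Real.exp (-(a+b)^2/(2*t)) * Real.exp (-(g1 a b t m)^2/(2*t))) := by
          rw [hexp, halg]
    _ = ((2*π*t)⁻¹ * Real.exp (-(a+b)^2/(2*t))) *
        (Real.exp (-(g1 a b t m)^2/(2*t)) * (t * b * (t-m) / (w t m ^ 3))) := by ring

lemma integrand_continuousOn {a b t : ℝ} (ha : 0 < a) (hb : 0 < b) (ht : 0 < t) :
    ContinuousOn (fun m : ℝ =>
      (2 * π * (t - m)) ^ (-(1 / 2 : ℝ)) * Real.exp (-a ^ 2 / (2 * (t - m))) *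
        (b * (2 * π) ^ (-(1 / 2 : ℝ)) * m ^ (-(3 / 2 : ℝ)) * Real.exp (-b ^ 2 / (2 * m))))
      (Icc 0 t) := by
  have hπ : (0:ℝ) < 2*π := by positivity
  have hP1 := contP (a^2/2) (1/2) (by positivity) (by norm_num)
  have hP2 := contP (b^2/2) (3/2) (by positivity) (by norm_num)
  have hc1 : ContinuousOn (fun m : ℝ =>
      (t - m) ^ (-(1/2):ℝ) * Real.exp (-(a^2/2)/(t-m))) (Icc 0 t) := by
    apply hP1.comp (continuous_const.sub continuous_id).continuousOn
    intro x hx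
    simp only [Pi.sub_apply, id_eq, mem_Ici]
    linarith [hx.2]
  have hc2 : ContinuousOn (fun m : ℝ =>
      m ^ (-(3/2):ℝ) * Real.exp (-(b^2/2)/m)) (Icc 0 t) := by
    apply hP2.comp continuous_id.continuousOn
    intro x hx
    exact hx.1
  have hcc : ContinuousOn (fun m : ℝ =>
      ((2*π) ^ (-(1/2):ℝ) * ((t - m) ^ (-(1/2):ℝ) * Real.exp (-(a^2/2)/(t-m)))) *
      (b * (2*π) ^ (-(1/2):ℝ) * (m ^ (-(3/2):ℝ) * Real.exp (-(b^2/2)/m)))) (Icc 0 t) :=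
    (continuousOn_const.mul hc1).mul (continuousOn_const.mul hc2)
  apply hcc.congr
  intro m hm
  have hmt : (0:ℝ) ≤ t - m := by linarith [hm.2]
  have hrw : (2 * π * (t - m)) ^ (-(1 / 2 : ℝ))
      = (2*π) ^ (-(1/2):ℝ) * (t - m) ^ (-(1/2):ℝ) := Real.mul_rpow hπ.le hmt
  have he1 : -a ^ 2 / (2 * (t - m)) = -(a^2/2)/(t-m) := by
    rw [neg_div, neg_div, div_div]
  have he2 : -b ^ 2 / (2 * m) = -(b^2/2)/m := by
    rw [neg_div, neg_div, div_div]
  simp only [hrw, he1, he2]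
  ring

lemma inv_mul_sqrt {x : ℝ} (hx : 0 < x) : x⁻¹ * Real.sqrt x = (Real.sqrt x)⁻¹ := by
  have hsp : 0 < Real.sqrt x := Real.sqrt_pos.2 hx
  rw [inv_mul_eq_div, div_eq_iff hx.ne', eq_comm, inv_mul_eq_div, eq_comm, eq_div_iff hsp.ne']
  exact Real.mul_self_sqrt hx.le

lemma final_const {t : ℝ} (ht : 0 < t) :
    (2*π*t)⁻¹ * Real.sqrt (2*π*t) = (2*π*t) ^ (-(1/2):ℝ) := by
  have h : (0:ℝ) < 2*π*t := by positivity
  rw [rpow_neg_half_eq h]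
  exact inv_mul_sqrt h

end Stmt4Aux

open Stmt4Aux

/-- Convolution identity: for positive reals `a, b, t`,
`∫₀ᵗ p_{t−m}(a)·(−p′_m(b)) dm = p_t(a+b)`, where `p_s(x) = (2πs)^{-1/2} e^{-x²/(2s)}` is the
centered Gaussian density with variance `s`, so that `−p′_m(b) = b·(2π)^{-1/2}·m^{-3/2}·e^{-b²/(2m)}`. -/
theorem stmt_4 (a b t : ℝ) (ha : 0 < a) (hb : 0 < b) (ht : 0 < t) :
    (∫ m in (0 : ℝ)..t,
        (2 * π * (t - m)) ^ (-(1 / 2 : ℝ)) * Real.exp (-a ^ 2 / (2 * (t - m))) *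
          (b * (2 * π) ^ (-(1 / 2 : ℝ)) * m ^ (-(3 / 2 : ℝ)) * Real.exp (-b ^ 2 / (2 * m))))
      = (2 * π * t) ^ (-(1 / 2 : ℝ)) * Real.exp (-(a + b) ^ 2 / (2 * t)) := by
  set K : ℝ := (2*π*t)⁻¹ * Real.exp (-(a+b)^2/(2*t)) with hK
  have hcont : ContinuousOn (fun s => K * G a b t s) (Icc 0 t) :=
    continuousOn_const.mul (G_continuousOn ha hb ht)
  have hderiv : ∀ x ∈ Ioo (0:ℝ) t, HasDerivWithinAt (fun s => K * G a b t s)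
      ((2 * π * (t - x)) ^ (-(1 / 2 : ℝ)) * Real.exp (-a ^ 2 / (2 * (t - x))) *
        (b * (2 * π) ^ (-(1 / 2 : ℝ)) * x ^ (-(3 / 2 : ℝ)) * Real.exp (-b ^ 2 / (2 * x))))
      (Ioi x) x := by
    intro x hx
    have := ((G_hasDerivAt (a:=a) (b:=b) ht hx).const_mul K).hasDerivWithinAt (s := Ioi x)
    rwa [← integrand_eq ha hb ht hx] at this
  have hint : IntervalIntegrable (fun m : ℝ =>
      (2 * π * (t - m)) ^ (-(1 / 2 : ℝ)) * Real.exp (-a ^ 2 / (2 * (t - m))) *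
        (b * (2 * π) ^ (-(1 / 2 : ℝ)) * m ^ (-(3 / 2 : ℝ)) * Real.exp (-b ^ 2 / (2 * m))))
      volume 0 t := by
    apply ContinuousOn.intervalIntegrable
    rw [uIcc_of_le ht.le]
    exact integrand_continuousOn ha hb ht
  have FTC := intervalIntegral.integral_eq_sub_of_hasDeriv_right_of_le ht.le hcont hderiv hint
  rw [FTC]
  have hGt : G a b t t = Real.sqrt (2*π*t)/2 - Real.exp (2*a*b/t) * (Real.sqrt (2*π*t)/2) := by
    rw [G, if_neg (not_le.2 ht), if_pos le_rfl]
  have hG0 : G a b t 0 = -(Real.sqrt (2*π*t)/2) - Real.exp (2*a*b/t) * (Real.sqrt (2*π*t)/2) := by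
    rw [G, if_pos le_rfl]
  rw [hGt, hG0, hK]
  have : (2*π*t)⁻¹ * Real.exp (-(a+b)^2/(2*t)) *
      (Real.sqrt (2*π*t)/2 - Real.exp (2*a*b/t) * (Real.sqrt (2*π*t)/2)) -
      (2*π*t)⁻¹ * Real.exp (-(a+b)^2/(2*t)) *
      (-(Real.sqrt (2*π*t)/2) - Real.exp (2*a*b/t) * (Real.sqrt (2*π*t)/2))
      = ((2*π*t)⁻¹ * Real.sqrt (2*π*t)) * Real.exp (-(a+b)^2/(2*t)) := by ring
  rw [this, final_const ht]
end

section
/- For positive real numbers a, b, t, define f_t(a,b) := (b/(2π)) ∫₀ᵗ (t−m)^{−1/2} m^{−3/2} exp( −(1/2)( a²/(t−m) + b²/m ) ) dm. Then f_t(a,b) = f_t(b,a). -/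
open MeasureTheory Real Set Filter

lemma aux_tendsto (p k : ℝ) (hk : 0 < k) :
    Tendsto (fun x : ℝ => x ^ p * Real.exp (-(k / x))) (nhdsWithin 0 (Set.Ioi 0)) (nhds 0) := by
  have h := (tendsto_rpow_mul_exp_neg_mul_atTop_nhds_zero (-p) k hk).comp
    tendsto_inv_nhdsGT_zero
  refine h.congr' ?_
  filter_upwards [self_mem_nhdsWithin] with x (hx : 0 < x)
  show (x⁻¹) ^ (-p) * Real.exp (-k * x⁻¹) = x ^ p * Real.exp (-(k / x))
  rw [Real.inv_rpow hx.le, Real.rpow_neg hx.le, inv_inv, div_eq_mul_inv, neg_mul]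

lemma aux_contH (p k : ℝ) (hp : p ≠ 0) (hk : 0 < k) :
    ContinuousOn (fun x : ℝ => x ^ p * Real.exp (-(k / x))) (Set.Ici 0) := by
  intro x hx
  rcases eq_or_lt_of_le (show (0:ℝ) ≤ x from hx) with h0 | h0
  · subst h0
    have hval : (fun x : ℝ => x ^ p * Real.exp (-(k / x))) 0 = 0 := by
      simp [Real.zero_rpow hp]
    unfold ContinuousWithinAt
    rw [hval, ← Set.Ioi_insert, nhdsWithin_insert, tendsto_sup]
    constructor
    · rw [tendsto_pure_left]
      intro s hs
      simpa [Real.zero_rpow hp] using mem_of_mem_nhds hs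
    · exact aux_tendsto p k hk
  · exact (ContinuousAt.continuousWithinAt (by
      have h1 : ContinuousAt (fun x : ℝ => x ^ p) x :=
        Real.continuousAt_rpow_const x p (Or.inl h0.ne')
      exact h1.mul (Real.continuous_exp.continuousAt.comp
        ((continuousAt_const.div continuousAt_id h0.ne').neg))))

lemma sq_rpow_neg_half {W : ℝ} (hW : 0 < W) : (W ^ (-(1/2) : ℝ)) ^ 2 = W⁻¹ := by
  rw [← Real.rpow_natCast (W ^ (-(1/2):ℝ)) 2, ← Real.rpow_mul hW.le]
  norm_num [Real.rpow_neg_one]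

lemma sq_rpow_neg_threehalf {W : ℝ} (hW : 0 < W) : (W ^ (-(3/2) : ℝ)) ^ 2 = (W ^ 3)⁻¹ := by
  rw [← Real.rpow_natCast (W ^ (-(3/2):ℝ)) 2, ← Real.rpow_mul hW.le]
  rw [show (-(3/2:ℝ)) * (2:ℕ) = -(3:ℕ) by push_cast; ring, Real.rpow_neg hW.le,
    Real.rpow_natCast]

lemma aux_gcont (t c d : ℝ) (ht : 0 < t) (hc : 0 < c) (hd : 0 < d) :
    ContinuousOn (fun m : ℝ => (t - m) ^ (-(1/2):ℝ) * m ^ (-(3/2):ℝ) *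
      Real.exp (-(1/2) * (c^2/(t-m) + d^2/m))) (Set.Icc 0 t) := by
  have hF : ContinuousOn
      (fun m : ℝ => (t - m) ^ (-(1/2):ℝ) * Real.exp (-((c^2/2) / (t - m))))
      (Set.Icc 0 t) := by
    refine (aux_contH (-(1/2)) (c^2/2) (by norm_num) (by positivity)).comp
      ((continuous_const.sub continuous_id).continuousOn) ?_
    intro m hm
    simp only [Set.mem_Ici]
    linarith [hm.2]
  have hG : ContinuousOn
      (fun m : ℝ => m ^ (-(3/2):ℝ) * Real.exp (-((d^2/2) / m))) (Set.Icc 0 t) :=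
    (aux_contH (-(3/2)) (d^2/2) (by norm_num) (by positivity)).mono
      (fun m hm => hm.1)
  refine ContinuousOn.congr (hF.mul hG) ?_
  intro m hm
  have h : -(1/2 : ℝ) * (c^2/(t-m) + d^2/m) = -((c^2/2)/(t-m)) + -((d^2/2)/m) := by
    ring
  simp only [h, Real.exp_add, Pi.mul_apply]
  ring

/-- Symmetry of the first-passage convolution integral:
`f_t(a,b) := (b/(2π)) ∫₀ᵗ (t−m)^{-1/2} m^{-3/2} exp(−(a²/(t−m) + b²/m)/2) dm`
satisfies `f_t(a,b) = f_t(b,a)` for positive `a, b, t`. -/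
theorem stmt_5 (a b t : ℝ) (ha : 0 < a) (hb : 0 < b) (ht : 0 < t) :
    (b / (2 * π)) * ∫ m in (0 : ℝ)..t,
        (t - m) ^ (-(1 / 2 : ℝ)) * m ^ (-(3 / 2 : ℝ)) *
          Real.exp (-(1 / 2) * (a ^ 2 / (t - m) + b ^ 2 / m))
      = (a / (2 * π)) * ∫ m in (0 : ℝ)..t,
        (t - m) ^ (-(1 / 2 : ℝ)) * m ^ (-(3 / 2 : ℝ)) *
          Real.exp (-(1 / 2) * (b ^ 2 / (t - m) + a ^ 2 / m)) := by
  set gab : ℝ → ℝ := fun m => (t - m) ^ (-(1/2):ℝ) * m ^ (-(3/2):ℝ) *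
      Real.exp (-(1/2) * (a^2/(t-m) + b^2/m)) with hgab
  set gba : ℝ → ℝ := fun m => (t - m) ^ (-(1/2):ℝ) * m ^ (-(3/2):ℝ) *
      Real.exp (-(1/2) * (b^2/(t-m) + a^2/m)) with hgba
  set φ : ℝ → ℝ := fun m => t * a^2 * m / (a^2 * m + b^2 * (t - m)) with hφdef
  set f' : ℝ → ℝ := fun m => t^2 * a^2 * b^2 / (a^2 * m + b^2 * (t - m))^2 with hf'def
  have hDpos : ∀ m ∈ Set.Icc (0:ℝ) t, 0 < a^2 * m + b^2 * (t - m) := by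
    intro m hm
    rcases eq_or_lt_of_le hm.1 with h | h
    · rw [← h]
      simpa using by positivity
    · have h1 : 0 < a^2 * m := by positivity
      nlinarith [mul_nonneg (sq_nonneg b) (sub_nonneg.mpr hm.2)]
  have himage : ∀ m ∈ Set.Icc (0:ℝ) t, φ m ∈ Set.Icc (0:ℝ) t := by
    intro m hm
    have hD := hDpos m hm
    constructor
    · exact div_nonneg (mul_nonneg (by positivity) hm.1) hD.le
    · rw [div_le_iff₀ hD]
      nlinarith [mul_nonneg (mul_nonneg ht.le (sq_nonneg b)) (sub_nonneg.mpr hm.2)]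
  have hφcont : ContinuousOn φ (Set.uIcc 0 t) := by
    rw [Set.uIcc_of_le ht.le]
    exact ContinuousOn.div (by fun_prop) (by fun_prop)
      (fun m hm => (hDpos m hm).ne')
  have hf'cont : ContinuousOn f' (Set.uIcc 0 t) := by
    rw [Set.uIcc_of_le ht.le]
    exact ContinuousOn.div continuousOn_const (by fun_prop)
      (fun m hm => pow_ne_zero 2 (hDpos m hm).ne')
  have hφ0 : φ 0 = 0 := by simp [hφdef]
  have hφt : φ t = t := by
    have hne : a^2 * t ≠ 0 := by positivity
    simp only [hφdef, sub_self, mul_zero, add_zero]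
    field_simp
  have hderiv : ∀ x ∈ Set.Ioo (min (0:ℝ) t) (max 0 t),
      HasDerivWithinAt φ (f' x) (Set.Ioi x) x := by
    rw [min_eq_left ht.le, max_eq_right ht.le]
    intro x hx
    have hD : (0:ℝ) < a^2 * x + b^2 * (t - x) :=
      hDpos x (Set.Ioo_subset_Icc_self hx)
    have h1 : HasDerivAt (fun m : ℝ => t * a^2 * m) (t * a^2 * 1) x :=
      (hasDerivAt_id x).const_mul (t * a^2)
    have h2 : HasDerivAt (fun m : ℝ => a^2 * m + b^2 * (t - m))
        (a^2 * 1 + b^2 * (-1)) x :=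
      ((hasDerivAt_id x).const_mul (a^2)).add
        (((hasDerivAt_id x).const_sub t).const_mul (b^2))
    have h3 := h1.div h2 hD.ne'
    have h4 : HasDerivAt φ (f' x) x := by
      refine HasDerivAt.congr_deriv h3 ?_
      rw [hf'def]
      field_simp
      ring
    exact h4.hasDerivWithinAt
  have hg : ContinuousOn gba (φ '' Set.uIcc 0 t) := by
    refine (aux_gcont t b a ht hb ha).mono ?_
    rw [Set.uIcc_of_le ht.le]
    rintro _ ⟨m, hm, rfl⟩
    exact himage m hm
  have hsub := intervalIntegral.integral_comp_smul_deriv'' hφcont hderiv hf'cont hg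
  have hpt : ∀ x ∈ Set.uIcc (0:ℝ) t, f' x • (gba ∘ φ) x = (b/a) * gab x := by
    rw [Set.uIcc_of_le ht.le]
    intro x hx
    rcases eq_or_lt_of_le hx.1 with h0 | h0
    · rw [← h0]
      simp [Function.comp, hφ0, hgba, hgab,
        Real.zero_rpow (show (-(3/2):ℝ) ≠ 0 by norm_num)]
    rcases eq_or_lt_of_le hx.2 with hT | hT
    · rw [hT]
      simp [Function.comp, hφt, hgba, hgab, sub_self,
        Real.zero_rpow (show (-(1/2):ℝ) ≠ 0 by norm_num)]
    · -- interior case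
      have hD : (0:ℝ) < a^2 * x + b^2 * (t - x) :=
        hDpos x ⟨h0.le, hT.le⟩
      have htx : 0 < t - x := sub_pos.mpr hT
      have e1 : φ x = t * a^2 * x / (a^2 * x + b^2 * (t - x)) := rfl
      have e2 : t - φ x = t * b^2 * (t - x) / (a^2 * x + b^2 * (t - x)) := by
        rw [e1]
        field_simp
        ring
      have hP : 0 < t * b^2 * (t - x) / (a^2 * x + b^2 * (t - x)) :=
        div_pos (mul_pos (by positivity) htx) hD
      have hQ : 0 < t * a^2 * x / (a^2 * x + b^2 * (t - x)) :=
        div_pos (by positivity) hD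
      have hexp : -(1/2 : ℝ) * (b^2/(t - φ x) + a^2/(φ x))
          = -(1/2 : ℝ) * (a^2/(t-x) + b^2/x) := by
        rw [e1, e2]
        field_simp
        ring
      have hfac : f' x * ((t * b^2 * (t - x) / (a^2 * x + b^2 * (t - x))) ^ (-(1/2):ℝ)
            * (t * a^2 * x / (a^2 * x + b^2 * (t - x))) ^ (-(3/2):ℝ))
          = (b/a) * ((t - x) ^ (-(1/2):ℝ) * x ^ (-(3/2):ℝ)) := by
        have hA : 0 < f' x * ((t * b^2 * (t - x) / (a^2 * x + b^2 * (t - x))) ^ (-(1/2):ℝ)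
            * (t * a^2 * x / (a^2 * x + b^2 * (t - x))) ^ (-(3/2):ℝ)) :=
          mul_pos (by rw [hf'def]; positivity)
            (mul_pos (Real.rpow_pos_of_pos hP _) (Real.rpow_pos_of_pos hQ _))
        have hB : 0 < (b/a) * ((t - x) ^ (-(1/2):ℝ) * x ^ (-(3/2):ℝ)) :=
          mul_pos (div_pos hb ha)
            (mul_pos (Real.rpow_pos_of_pos htx _) (Real.rpow_pos_of_pos h0 _))
        have hsq : (f' x * ((t * b^2 * (t - x) / (a^2 * x + b^2 * (t - x))) ^ (-(1/2):ℝ)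
              * (t * a^2 * x / (a^2 * x + b^2 * (t - x))) ^ (-(3/2):ℝ))) ^ 2
            = ((b/a) * ((t - x) ^ (-(1/2):ℝ) * x ^ (-(3/2):ℝ))) ^ 2 := by
          rw [mul_pow, mul_pow, mul_pow, mul_pow, sq_rpow_neg_half hP,
            sq_rpow_neg_threehalf hQ, sq_rpow_neg_half htx, sq_rpow_neg_threehalf h0,
            hf'def]
          field_simp
        exact (pow_left_inj₀ hA.le hB.le two_ne_zero).mp hsq
      show f' x * gba (φ x) = (b/a) * gab x
      rw [hgba, hgab]
      simp only []
      rw [hexp, e2, e1]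
      linear_combination Real.exp (-(1/2 : ℝ) * (a^2/(t-x) + b^2/x)) * hfac
  have hcongr : ∫ x in (0:ℝ)..t, f' x • (gba ∘ φ) x
      = ∫ x in (0:ℝ)..t, (b/a) * gab x :=
    intervalIntegral.integral_congr hpt
  have hIba : ∫ m in (0:ℝ)..t, gba m = (b/a) * ∫ m in (0:ℝ)..t, gab m := by
    calc ∫ m in (0:ℝ)..t, gba m = ∫ u in (φ 0)..(φ t), gba u := by rw [hφ0, hφt]
      _ = ∫ x in (0:ℝ)..t, f' x • (gba ∘ φ) x := hsub.symm
      _ = ∫ x in (0:ℝ)..t, (b/a) * gab x := hcongr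
      _ = (b/a) * ∫ x in (0:ℝ)..t, gab x := intervalIntegral.integral_const_mul _ _
  rw [hIba]
  have hπ : (π : ℝ) ≠ 0 := Real.pi_ne_zero
  field_simp
end

section
/- For fixed positive real numbers b and t, define f_t(a,b) := (b/(2π)) ∫₀ᵗ (t−m)^{−1/2} m^{−3/2} exp( −(1/2)( a²/(t−m) + b²/m ) ) dm for a > 0. Then the function a ↦ f_t(a,b) is differentiable on (0,∞) and its derivative satisfies ∂_a f_t(a,b) = −((a+b)/t)·f_t(a,b). -/
open MeasureTheory Real

section Stmt6Aux

open Set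

/-- The substitution `v = (b(t-m) - am)/√(t·m·(t-m))`. -/
noncomputable def gsub (a b t m : ℝ) : ℝ :=
  (b * (t - m) - a * m) / (Real.sqrt t * Real.sqrt m * Real.sqrt (t - m))

/-- The derivative of `gsub` in `m`. -/
noncomputable def gsub' (a b t m : ℝ) : ℝ :=
  -(Real.sqrt t * (a * m + b * (t - m)) / (2 * Real.sqrt m ^ 3 * Real.sqrt (t - m) ^ 3))

/-- The transformed integrand. -/
noncomputable def hfun (a b t v : ℝ) : ℝ :=
  (Real.exp (-(1/2) * v ^ 2) + Real.exp (-(1/2) * v ^ 2) * (v / Real.sqrt (v ^ 2 + 4 * (a * b / t)))) / Real.sqrt t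

lemma stmt6_alg1 (a b m tm s1 s2 st : ℝ) (h1 : s1 ≠ 0) (h2 : s2 ≠ 0) (h3 : st ≠ 0)
    (e1 : s1 ^ 2 = m) (e2 : s2 ^ 2 = tm) (e3 : st ^ 2 = m + tm) :
    -(st * (a * m + b * tm) / (2 * s1 ^ 3 * s2 ^ 3)) =
      ((b * (-1) - a * 1) * (st * s1 * s2) -
        (b * tm - a * m) * (st * (1 / (2 * s1)) * s2 + st * s1 * (1 / (2 * s2) * (-1)))) /
        (st * s1 * s2) ^ 2 := by
  subst e1; subst e2
  field_simp
  linear_combination (-(a*s1^2+b*s2^2)) * e3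

lemma gsub_deriv (a b t : ℝ) (ht : 0 < t) {m : ℝ} (hm : m ∈ Ioo (0:ℝ) t) :
    HasDerivAt (gsub a b t) (gsub' a b t m) m := by
  obtain ⟨hm0, hmt⟩ := hm
  have htm : (0:ℝ) < t - m := by linarith
  have hs1 : (0:ℝ) < Real.sqrt m := Real.sqrt_pos.2 hm0
  have hs2 : (0:ℝ) < Real.sqrt (t - m) := Real.sqrt_pos.2 htm
  have hst : (0:ℝ) < Real.sqrt t := Real.sqrt_pos.2 ht
  have h1 : HasDerivAt (fun x : ℝ => Real.sqrt x) (1 / (2 * Real.sqrt m)) m :=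
    Real.hasDerivAt_sqrt hm0.ne'
  have h2 : HasDerivAt (fun x : ℝ => Real.sqrt (t - x))
      (1 / (2 * Real.sqrt (t - m)) * (-1)) m :=
    (Real.hasDerivAt_sqrt htm.ne').comp m ((hasDerivAt_id m).const_sub t)
  have hN : HasDerivAt (fun x : ℝ => b * (t - x) - a * x) (b * (-1) - a * 1) m :=
    (((hasDerivAt_id m).const_sub t).const_mul b).sub ((hasDerivAt_id m).const_mul a)
  have hD : HasDerivAt (fun x : ℝ => Real.sqrt t * Real.sqrt x * Real.sqrt (t - x))
      (Real.sqrt t * (1 / (2 * Real.sqrt m)) * Real.sqrt (t - m)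
        + Real.sqrt t * Real.sqrt m * (1 / (2 * Real.sqrt (t - m)) * (-1))) m := by
    have h3 : HasDerivAt (fun x : ℝ => Real.sqrt t * Real.sqrt x)
        (Real.sqrt t * (1 / (2 * Real.sqrt m))) m := h1.const_mul _
    exact h3.mul h2
  have hDne : Real.sqrt t * Real.sqrt m * Real.sqrt (t - m) ≠ 0 := by positivity
  have hdiv := hN.div hD hDne
  have heq : gsub a b t = fun x : ℝ =>
      (b * (t - x) - a * x) / (Real.sqrt t * Real.sqrt x * Real.sqrt (t - x)) := rfl
  rw [heq]
  refine hdiv.congr_deriv ?_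
  symm
  rw [gsub']
  exact stmt6_alg1 a b m (t - m) _ _ _ hs1.ne' hs2.ne' hst.ne'
    (Real.sq_sqrt hm0.le) (Real.sq_sqrt htm.le)
    (by rw [Real.sq_sqrt ht.le]; ring)

lemma stmt6_pointwise (a b t : ℝ) (ha : 0 < a) (hb : 0 < b) (ht : 0 < t) {m : ℝ}
    (hm : m ∈ Ioo (0:ℝ) t) :
    (t - m) ^ (-(1/2:ℝ)) * m ^ (-(3/2:ℝ)) * Real.exp (-(1/2) * (a ^ 2 / (t - m) + b ^ 2 / m))
      = Real.exp (-(a+b)^2/(2*t)) / b * (|gsub' a b t m| * hfun a b t (gsub a b t m)) := by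
  obtain ⟨hm0, hmt⟩ := hm
  have htm : (0:ℝ) < t - m := by linarith
  have hs1 : (0:ℝ) < Real.sqrt m := Real.sqrt_pos.2 hm0
  have hs2 : (0:ℝ) < Real.sqrt (t - m) := Real.sqrt_pos.2 htm
  have hst : (0:ℝ) < Real.sqrt t := Real.sqrt_pos.2 ht
  have e1 : Real.sqrt m ^ 2 = m := Real.sq_sqrt hm0.le
  have e2 : Real.sqrt (t - m) ^ 2 = t - m := Real.sq_sqrt htm.le
  have e3 : Real.sqrt t ^ 2 = t := Real.sq_sqrt ht.le
  have hamb : (0:ℝ) < a * m + b * (t - m) := by nlinarith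
  have hD2 : (Real.sqrt t * Real.sqrt m * Real.sqrt (t - m)) ^ 2 = t * m * (t - m) := by
    rw [mul_pow, mul_pow, e1, e2, e3]
  have hr1 : (t - m) ^ (-(1/2:ℝ)) = (Real.sqrt (t - m))⁻¹ := by
    rw [Real.rpow_neg htm.le, Real.sqrt_eq_rpow]
  have hr2 : m ^ (-(3/2:ℝ)) = (Real.sqrt m ^ 3)⁻¹ := by
    rw [Real.rpow_neg hm0.le]
    congr 1
    rw [Real.sqrt_eq_rpow, ← Real.rpow_natCast (m ^ ((1:ℝ)/2)) 3, ← Real.rpow_mul hm0.le]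
    norm_num
  have habs : |gsub' a b t m|
      = Real.sqrt t * (a * m + b * (t - m)) / (2 * Real.sqrt m ^ 3 * Real.sqrt (t - m) ^ 3) := by
    rw [gsub', abs_neg, abs_of_pos (by positivity)]
  have hsq : Real.sqrt ((gsub a b t m) ^ 2 + 4 * (a * b / t))
      = (a * m + b * (t - m)) / (Real.sqrt t * Real.sqrt m * Real.sqrt (t - m)) := by
    have h4 : (gsub a b t m) ^ 2 + 4 * (a * b / t)
        = ((a * m + b * (t - m)) / (Real.sqrt t * Real.sqrt m * Real.sqrt (t - m))) ^ 2 := by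
      rw [gsub, div_pow, div_pow, hD2]
      field_simp
      ring
    rw [h4, Real.sqrt_sq (by positivity)]
  have hexp : -(1/2:ℝ) * (a ^ 2 / (t - m) + b ^ 2 / m)
      = -(a+b)^2/(2*t) + -(1/2) * (gsub a b t m) ^ 2 := by
    rw [gsub, div_pow, hD2]
    field_simp
    ring
  rw [hr1, hr2, habs, hexp, Real.exp_add, hfun]
  have hE : Real.exp (-(1/2) * gsub a b t m ^ 2)
      + Real.exp (-(1/2) * gsub a b t m ^ 2)
        * (gsub a b t m / Real.sqrt ((gsub a b t m) ^ 2 + 4 * (a * b / t)))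
      = Real.exp (-(1/2) * gsub a b t m ^ 2) * (2 * b * (t - m) / (a * m + b * (t - m))) := by
    rw [hsq, gsub]
    have hDne : Real.sqrt t * Real.sqrt m * Real.sqrt (t - m) ≠ 0 := by positivity
    field_simp
    ring
  rw [hE]
  rw [show 2 * b * (t - m) = 2 * b * Real.sqrt (t - m) ^ 2 by rw [e2]]
  have algfin : ∀ (K E X u v w : ℝ), b ≠ 0 → X ≠ 0 → w ≠ 0 → v ≠ 0 → u ≠ 0 →
      v⁻¹ * u⁻¹ * (K * E) = K / b * (w * X / (2 * u * v ^ 3) * (E * (2 * b * v ^ 2 / X) / w)) := by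
    intro K E X u v w h1 h2 h3 h4 h5
    field_simp
  exact algfin _ _ _ _ _ _ hb.ne' hamb.ne' hst.ne' hs2.ne' (by positivity)

lemma gsub_image (a b t : ℝ) (ha : 0 < a) (hb : 0 < b) (ht : 0 < t) :
    gsub a b t '' Ioo (0:ℝ) t = univ := by
  apply eq_univ_of_forall
  intro v
  have hst : (0:ℝ) < Real.sqrt t := Real.sqrt_pos.2 ht
  have e3 : Real.sqrt t ^ 2 = t := Real.sq_sqrt ht.le
  set s : ℝ := Real.sqrt (v ^ 2 * t + 4 * a * b) with hs_def
  have hs_nonneg : 0 ≤ s := Real.sqrt_nonneg _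
  have hs2 : s ^ 2 = v ^ 2 * t + 4 * a * b := Real.sq_sqrt (by positivity)
  have hkey : s ^ 2 - (v * Real.sqrt t) ^ 2 = 4 * a * b := by
    rw [hs2, mul_pow, e3]; ring
  have hwpos : 0 < v * Real.sqrt t + s := by
    nlinarith [mul_pos ha hb]
  set w : ℝ := (v * Real.sqrt t + s) / (2 * b) with hw_def
  have hw : 0 < w := by positivity
  have hquad : b * w ^ 2 - v * Real.sqrt t * w - a = 0 := by
    have : (2 * b * w - v * Real.sqrt t) ^ 2 = s ^ 2 := by
      rw [hw_def]; field_simp; ring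
    nlinarith [this, hkey]
  set m : ℝ := t / (1 + w ^ 2) with hm_def
  have h1w : (0:ℝ) < 1 + w ^ 2 := by positivity
  have hm0 : 0 < m := by positivity
  have hmt : m < t := by
    rw [hm_def]
    exact div_lt_self ht (by nlinarith)
  refine ⟨m, ⟨hm0, hmt⟩, ?_⟩
  have htm : t - m = t * w ^ 2 / (1 + w ^ 2) := by
    rw [hm_def]; field_simp; ring
  have hsm : Real.sqrt m = Real.sqrt t / Real.sqrt (1 + w ^ 2) := by
    rw [hm_def, Real.sqrt_div ht.le]
  have hstm : Real.sqrt (t - m) = Real.sqrt t * w / Real.sqrt (1 + w ^ 2) := by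
    rw [htm, Real.sqrt_div (by positivity), Real.sqrt_mul ht.le, Real.sqrt_sq hw.le]
  have h1w2 : Real.sqrt (1 + w ^ 2) ^ 2 = 1 + w ^ 2 := Real.sq_sqrt h1w.le
  have h1wpos : (0:ℝ) < Real.sqrt (1 + w ^ 2) := Real.sqrt_pos.2 h1w
  rw [gsub, hsm, hstm, htm, hm_def]
  rw [div_eq_iff (by positivity)]
  field_simp
  linear_combination t*(b*w^2-a)*h1w2 + t*(1+w^2)*hquad - w*(1+w^2)*v*Real.sqrt t*e3

lemma hfun_integral (a b t : ℝ) (ha : 0 < a) (hb : 0 < b) (ht : 0 < t) :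
    ∫ v : ℝ, hfun a b t v = Real.sqrt (2 * π) / Real.sqrt t := by
  have hc : (0:ℝ) < 4 * (a * b / t) := by positivity
  have hA : Integrable (fun v : ℝ => Real.exp (-(1/2) * v ^ 2)) :=
    integrable_exp_neg_mul_sq (by norm_num)
  have hBcont : Continuous (fun v : ℝ =>
      Real.exp (-(1/2) * v ^ 2) * (v / Real.sqrt (v ^ 2 + 4 * (a * b / t)))) := by
    have h1 : ∀ v : ℝ, Real.sqrt (v ^ 2 + 4 * (a * b / t)) ≠ 0 := fun v => by positivity
    fun_prop (disch := intro v; exact h1 v)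
  have hbound : ∀ v : ℝ,
      ‖Real.exp (-(1/2) * v ^ 2) * (v / Real.sqrt (v ^ 2 + 4 * (a * b / t)))‖
      ≤ Real.exp (-(1/2) * v ^ 2) := by
    intro v
    rw [norm_mul, norm_of_nonneg (Real.exp_pos _).le]
    have hle : ‖v / Real.sqrt (v ^ 2 + 4 * (a * b / t))‖ ≤ 1 := by
      rw [norm_div, norm_of_nonneg (Real.sqrt_nonneg _)]
      rw [div_le_one (by positivity)]
      calc ‖v‖ = Real.sqrt (v ^ 2) := by rw [Real.sqrt_sq_eq_abs]; rfl
      _ ≤ Real.sqrt (v ^ 2 + 4 * (a * b / t)) := Real.sqrt_le_sqrt (by linarith)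
    nlinarith [Real.exp_pos (-(1/2) * v ^ 2), norm_nonneg (v / Real.sqrt (v ^ 2 + 4 * (a * b / t)))]
  have hB : Integrable (fun v : ℝ =>
      Real.exp (-(1/2) * v ^ 2) * (v / Real.sqrt (v ^ 2 + 4 * (a * b / t)))) := by
    refine hA.mono hBcont.aestronglyMeasurable (Filter.Eventually.of_forall fun v => ?_)
    rw [norm_of_nonneg (Real.exp_pos _).le]
    exact hbound v
  have hBzero : ∫ v : ℝ, Real.exp (-(1/2) * v ^ 2) * (v / Real.sqrt (v ^ 2 + 4 * (a * b / t))) = 0 := by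
    have h := integral_neg_eq_self
      (fun v : ℝ => Real.exp (-(1/2) * v ^ 2) * (v / Real.sqrt (v ^ 2 + 4 * (a * b / t))))
      (volume : Measure ℝ)
    simp only [neg_sq, neg_div, mul_neg, integral_neg] at h
    linarith
  have hAval : ∫ v : ℝ, Real.exp (-(1/2) * v ^ 2) = Real.sqrt (2 * π) := by
    have := integral_gaussian (1/2 : ℝ)
    rw [show (π / (1/2) : ℝ) = 2 * π by ring] at this
    convert this using 2 with v
  unfold hfun
  rw [integral_div, integral_add hA hB, hAval, hBzero, add_zero]

lemma gsub_inj (a b t : ℝ) (ha : 0 < a) (hb : 0 < b) (ht : 0 < t) :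
    InjOn (gsub a b t) (Ioo (0:ℝ) t) := by
  have hanti : StrictAntiOn (gsub a b t) (Ioo (0:ℝ) t) := by
    apply strictAntiOn_of_deriv_neg (convex_Ioo _ _)
    · intro m hm
      exact (gsub_deriv a b t ht hm).continuousAt.continuousWithinAt
    · intro m hm
      rw [interior_Ioo] at hm
      rw [(gsub_deriv a b t ht hm).deriv, gsub']
      have h1 : (0:ℝ) < t - m := by exact sub_pos.2 hm.2
      have h2 : (0:ℝ) < a * m + b * (t - m) := by nlinarith [hm.1]
      have : (0:ℝ) < Real.sqrt t * (a * m + b * (t - m))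
          / (2 * Real.sqrt m ^ 3 * Real.sqrt (t - m) ^ 3) := by
        have := Real.sqrt_pos.2 hm.1
        have := Real.sqrt_pos.2 h1
        have := Real.sqrt_pos.2 ht
        positivity
      linarith
  exact hanti.injOn

lemma stmt6_closed_form (a b t : ℝ) (ha : 0 < a) (hb : 0 < b) (ht : 0 < t) :
    (∫ m in (0:ℝ)..t, (t - m) ^ (-(1/2:ℝ)) * m ^ (-(3/2:ℝ))
        * Real.exp (-(1/2) * (a ^ 2 / (t - m) + b ^ 2 / m)))
      = Real.exp (-(a+b)^2/(2*t)) / b * (Real.sqrt (2 * π) / Real.sqrt t) := by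
  rw [intervalIntegral.integral_of_le ht.le, integral_Ioc_eq_integral_Ioo]
  have hsub := integral_image_eq_integral_abs_deriv_smul (measurableSet_Ioo)
    (fun m hm => (gsub_deriv a b t ht hm).hasDerivWithinAt)
    (gsub_inj a b t ha hb ht) (hfun a b t)
  rw [gsub_image a b t ha hb ht] at hsub
  rw [setIntegral_univ, hfun_integral a b t ha hb ht] at hsub
  calc ∫ m in Ioo (0:ℝ) t, (t - m) ^ (-(1/2:ℝ)) * m ^ (-(3/2:ℝ))
        * Real.exp (-(1/2) * (a ^ 2 / (t - m) + b ^ 2 / m))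
      = ∫ m in Ioo (0:ℝ) t,
          Real.exp (-(a+b)^2/(2*t)) / b * (|gsub' a b t m| • hfun a b t (gsub a b t m)) := by
        refine setIntegral_congr_fun measurableSet_Ioo fun m hm => ?_
        rw [smul_eq_mul]
        exact stmt6_pointwise a b t ha hb ht hm
    _ = Real.exp (-(a+b)^2/(2*t)) / b
          * ∫ m in Ioo (0:ℝ) t, |gsub' a b t m| • hfun a b t (gsub a b t m) := by
        rw [integral_const_mul]
    _ = Real.exp (-(a+b)^2/(2*t)) / b * (Real.sqrt (2 * π) / Real.sqrt t) := by
        rw [← hsub]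

end Stmt6Aux

/-- For fixed `b, t > 0`, the function
`a ↦ f_t(a,b) := (b/(2π)) ∫₀ᵗ (t−m)^{-1/2} m^{-3/2} exp(−(a²/(t−m) + b²/m)/2) dm`
is differentiable on `(0,∞)` with derivative `∂_a f_t(a,b) = −((a+b)/t)·f_t(a,b)`. -/
theorem stmt_6 (b t : ℝ) (hb : 0 < b) (ht : 0 < t) (f : ℝ → ℝ)
    (hf : ∀ a : ℝ, f a = (b / (2 * π)) * ∫ m in (0 : ℝ)..t,
        (t - m) ^ (-(1 / 2 : ℝ)) * m ^ (-(3 / 2 : ℝ)) *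
          Real.exp (-(1 / 2) * (a ^ 2 / (t - m) + b ^ 2 / m))) :
    ∀ a : ℝ, 0 < a → HasDerivAt f (-((a + b) / t) * f a) a := by
  have hpi : (0:ℝ) < π := Real.pi_pos
  set C : ℝ := Real.sqrt (2 * π) / (2 * π * Real.sqrt t) with hC
  have hclosed : ∀ a : ℝ, 0 < a → f a = Real.exp (-(a+b)^2/(2*t)) * C := by
    intro a ha
    rw [hf a, stmt6_closed_form a b t ha hb ht, hC]
    field_simp
  intro a ha
  have hu : HasDerivAt (fun x : ℝ => -(x+b)^2/(2*t)) (-(2*(a+b)^1*1)/(2*t)) a := by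
    exact (((hasDerivAt_id a).add_const b).pow 2).neg.div_const (2*t)
  have hF : HasDerivAt (fun x : ℝ => Real.exp (-(x+b)^2/(2*t)) * C)
      (Real.exp (-(a+b)^2/(2*t)) * (-(2*(a+b)^1*1)/(2*t)) * C) a := hu.exp.mul_const C
  have hev : f =ᶠ[nhds a] (fun x : ℝ => Real.exp (-(x+b)^2/(2*t)) * C) :=
    Filter.eventuallyEq_of_mem (Ioi_mem_nhds ha) fun x hx => hclosed x hx
  have := hF.congr_of_eventuallyEq hev
  refine this.congr_deriv ?_
  rw [hclosed a ha]
  field_simp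
end

section
/- Let m > 0, let B : [0,m] → ℝ be a function with B(0) = 0, and let r ∈ [0,m]. Define the cyclically shifted path Θ_r(B) : [0,m] → ℝ by Θ_r(B)(x) = B(r+x) − B(r) for 0 ≤ x ≤ m−r, and Θ_r(B)(x) = B(r+x−m) + B(m) − B(r) for m−r ≤ x ≤ m. Then for every α ∈ (0,1], sup_{0≤s<t≤m} |Θ_r(B)(t) − Θ_r(B)(s)| / (t−s)^α ≤ 2 · sup_{0≤s<t≤m} |B(t) − B(s)| / (t−s)^α. -/
open ENNReal

/-- The Vervaat-type cyclic shift `Θ_r(B)` of a path `B : [0,m] → ℝ` with `B(0) = 0` has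
`α`-Hölder seminorm at most twice that of `B`. -/
theorem stmt_10 (m : ℝ) (hm : 0 < m) (B : ℝ → ℝ) (hB0 : B 0 = 0)
    (r : ℝ) (hr : r ∈ Set.Icc 0 m) (Θ : ℝ → ℝ)
    (hΘ1 : ∀ x : ℝ, 0 ≤ x → x ≤ m - r → Θ x = B (r + x) - B r)
    (hΘ2 : ∀ x : ℝ, m - r ≤ x → x ≤ m → Θ x = B (r + x - m) + B m - B r)
    (α : ℝ) (hα0 : 0 < α) (hα1 : α ≤ 1) :
    (⨆ (s : ℝ) (t : ℝ) (_ : 0 ≤ s ∧ s < t ∧ t ≤ m),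
        ENNReal.ofReal (|Θ t - Θ s| / (t - s) ^ α))
      ≤ 2 * ⨆ (s : ℝ) (t : ℝ) (_ : 0 ≤ s ∧ s < t ∧ t ≤ m),
        ENNReal.ofReal (|B t - B s| / (t - s) ^ α) := by
  obtain ⟨hr0, hrm⟩ := hr
  set S := ⨆ (s : ℝ) (t : ℝ) (_ : 0 ≤ s ∧ s < t ∧ t ≤ m),
      ENNReal.ofReal (|B t - B s| / (t - s) ^ α) with hS
  have key : ∀ s t : ℝ, 0 ≤ s → s < t → t ≤ m →
      ENNReal.ofReal (|B t - B s| / (t - s) ^ α) ≤ S := fun s t h1 h2 h3 =>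
    le_iSup_of_le s (le_iSup_of_le t (le_iSup_of_le ⟨h1, h2, h3⟩ le_rfl))
  have hS2 : S ≤ 2 * S := le_mul_of_one_le_left zero_le one_le_two
  refine iSup_le fun s => iSup_le fun t => iSup_le fun ⟨hs0, hst, htm⟩ => ?_
  rcases le_or_gt t (m - r) with ht | ht
  · -- both in the first piece
    have e : Θ t - Θ s = B (r + t) - B (r + s) := by
      rw [hΘ1 s hs0 (le_trans hst.le ht), hΘ1 t (le_trans hs0 hst.le) ht]; ring
    have h := key (r + s) (r + t) (by linarith) (by linarith) (by linarith)
    rw [show r + t - (r + s) = t - s from by ring] at h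
    rw [e]
    exact h.trans hS2
  rcases le_or_gt (m - r) s with hs | hs
  · -- both in the second piece
    have e : Θ t - Θ s = B (r + t - m) - B (r + s - m) := by
      rw [hΘ2 s hs (le_trans hst.le htm), hΘ2 t ht.le htm]; ring
    have h := key (r + s - m) (r + t - m) (by linarith) (by linarith) (by linarith)
    rw [show r + t - m - (r + s - m) = t - s from by ring] at h
    rw [e]
    exact h.trans hS2
  · -- mixed case : s < m - r < t
    have e : Θ t - Θ s = (B (r + t - m) - B 0) + (B m - B (r + s)) := by
      rw [hΘ1 s hs0 hs.le, hΘ2 t ht.le htm, hB0]; ring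
    set u := r + t - m with hu
    set v := r + s with hv
    have hu0 : 0 < u := by simp only [hu]; linarith
    have hum : u ≤ m := by simp only [hu]; linarith
    have huts : u ≤ t - s := by simp only [hu]; linarith
    have hv0 : 0 ≤ v := by simp only [hv]; linarith
    have hvm : v < m := by simp only [hv]; linarith
    have hmv : m - v ≤ t - s := by simp only [hv]; linarith
    have hts : (0:ℝ) < t - s := by linarith
    have hpow : (0:ℝ) < (t - s) ^ α := Real.rpow_pos_of_pos hts α
    have key1 := key 0 u le_rfl hu0 hum
    rw [show u - 0 = u from by ring] at key1
    have key2 := key v m hv0 hvm le_rfl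
    -- real-valued bound
    have hreal : |Θ t - Θ s| / (t - s) ^ α
        ≤ |B u - B 0| / u ^ α + |B m - B v| / (m - v) ^ α := by
      have habs : |Θ t - Θ s| ≤ |B u - B 0| + |B m - B v| := by
        rw [e]; exact abs_add_le _ _
      have h1 : |B u - B 0| / (t - s) ^ α ≤ |B u - B 0| / u ^ α :=
        div_le_div_of_nonneg_left (abs_nonneg _) (Real.rpow_pos_of_pos hu0 α)
          (Real.rpow_le_rpow hu0.le huts hα0.le)
      have h2 : |B m - B v| / (t - s) ^ α ≤ |B m - B v| / (m - v) ^ α :=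
        div_le_div_of_nonneg_left (abs_nonneg _) (Real.rpow_pos_of_pos (by linarith) α)
          (Real.rpow_le_rpow (by linarith) hmv hα0.le)
      calc |Θ t - Θ s| / (t - s) ^ α
          ≤ (|B u - B 0| + |B m - B v|) / (t - s) ^ α := by
            exact div_le_div_of_nonneg_right habs hpow.le |>.trans_eq rfl
        _ = |B u - B 0| / (t - s) ^ α + |B m - B v| / (t - s) ^ α := add_div _ _ _
        _ ≤ |B u - B 0| / u ^ α + |B m - B v| / (m - v) ^ α := add_le_add h1 h2
    calc ENNReal.ofReal (|Θ t - Θ s| / (t - s) ^ α)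
        ≤ ENNReal.ofReal (|B u - B 0| / u ^ α + |B m - B v| / (m - v) ^ α) :=
          ENNReal.ofReal_le_ofReal hreal
      _ = ENNReal.ofReal (|B u - B 0| / u ^ α) + ENNReal.ofReal (|B m - B v| / (m - v) ^ α) :=
          ENNReal.ofReal_add (div_nonneg (abs_nonneg _) (Real.rpow_nonneg hu0.le α))
            (div_nonneg (abs_nonneg _) (Real.rpow_nonneg (by linarith) α))
      _ ≤ S + S := add_le_add key1 key2
      _ = 2 * S := (two_mul S).symm
end

section
/- Let K₀ be the metric space whose points are pairs (σ, f) with σ ∈ [0,∞) and f : [0,∞) → ℝ continuous, f(0) = 0, and f(t) = f(σ) for all t ≥ σ, equipped with the distance d((σ,f),(σ′,g)) := |σ − σ′| + sup_{y ≥ 0} |f(y) − g(y)|. Define the concatenation of (σ,f) and (σ′,g) as the pair (σ+σ′, f•g), where f•g(t) = f(t) for 0 ≤ t ≤ σ, f•g(t) = f(σ) + g(t−σ) for σ ≤ t ≤ σ+σ′, and f•g(t) = f•g(σ+σ′) for t ≥ σ+σ′. Then the concatenation map K₀ × K₀ → K₀, ((σ,f),(σ′,g)) ↦ (σ+σ′,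 f•g), is continuous. -/
open NNReal

/-- A point of `K₀`: a lifetime `σ ∈ [0,∞)` together with a continuous function
`f : [0,∞) → ℝ` with `f 0 = 0` which is constant equal to `f σ` beyond its lifetime `σ`. -/
def IsK0 (x : ℝ≥0 × (ℝ≥0 → ℝ)) : Prop :=
  Continuous x.2 ∧ x.2 0 = 0 ∧ ∀ t : ℝ≥0, x.1 ≤ t → x.2 t = x.2 x.1

/-- The distance `d((σ,f),(σ',g)) = |σ − σ'| + sup_{y ≥ 0} |f(y) − g(y)|` on `K₀`. -/
noncomputable def K0dist (x y : ℝ≥0 × (ℝ≥0 → ℝ)) : ℝ :=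
  |(x.1 : ℝ) - (y.1 : ℝ)| + ⨆ t : ℝ≥0, |x.2 t - y.2 t|

/-- Concatenation `((σ,f),(σ',g)) ↦ (σ+σ', f•g)`: `f•g(t) = f(t)` for `t ≤ σ` and
`f•g(t) = f(σ) + g(t−σ)` for `t ≥ σ` (so `f•g` is constant beyond `σ+σ'` whenever `g` is
constant beyond `σ'`). -/
noncomputable def K0concat (x y : ℝ≥0 × (ℝ≥0 → ℝ)) : ℝ≥0 × (ℝ≥0 → ℝ) :=
  (x.1 + y.1, fun t => if t ≤ x.1 then x.2 t else x.2 x.1 + y.2 (t - x.1))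

/-- Any continuous function on `ℝ≥0` that is eventually constant has bounded range. -/
lemma K0_bddAbove (F : ℝ≥0 → ℝ) (c : ℝ≥0) (hF : Continuous F)
    (hc : ∀ t, c ≤ t → F t = F c) : BddAbove (Set.range F) := by
  have hsub : Set.range F ⊆ F '' Set.Icc 0 c := by
    rintro _ ⟨t, rfl⟩
    rcases le_total t c with h | h
    · exact ⟨t, ⟨zero_le, h⟩, rfl⟩
    · exact ⟨c, ⟨zero_le, le_rfl⟩, (hc t h).symm⟩
  exact ((isCompact_Icc.image hF).bddAbove).mono hsub

/-- Uniform continuity of an eventually constant continuous function on `ℝ≥0`. -/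
lemma K0_unif (f : ℝ≥0 → ℝ) (c : ℝ≥0) (hf : Continuous f)
    (hc : ∀ t, c ≤ t → f t = f c) (ε : ℝ) (hε : 0 < ε) :
    ∃ δ : ℝ, 0 < δ ∧ ∀ s s' : ℝ≥0, |(s : ℝ) - (s' : ℝ)| ≤ δ → |f s - f s'| < ε := by
  have h1 : UniformContinuousOn f (Set.Icc 0 c) :=
    isCompact_Icc.uniformContinuousOn_of_continuous hf.continuousOn
  rw [Metric.uniformContinuousOn_iff] at h1
  obtain ⟨δ, hδ, H⟩ := h1 ε hε
  refine ⟨δ / 2, by positivity, ?_⟩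
  intro s s' hss'
  have hmin : ∀ u : ℝ≥0, f u = f (min u c) := by
    intro u
    rcases le_total u c with h | h
    · rw [min_eq_left h]
    · rw [min_eq_right h, hc u h]
  have hd : dist (min s c) (min s' c) < δ := by
    rw [NNReal.dist_eq]
    push_cast
    calc |min (s : ℝ) c - min (s' : ℝ) c| ≤ max |(s : ℝ) - s'| |(c : ℝ) - c| :=
          abs_min_sub_min_le_max _ _ _ _
      _ ≤ |(s : ℝ) - s'| := by simp
      _ ≤ δ / 2 := hss'
      _ < δ := by linarith
  have key := H (min s c) ⟨zero_le, min_le_right _ _⟩ (min s' c)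
    ⟨zero_le, min_le_right _ _⟩ hd
  rw [Real.dist_eq] at key
  rw [hmin s, hmin s']
  exact key

lemma abs_add_four (a b c d : ℝ) : |a + b + c + d| ≤ |a| + |b| + |c| + |d| := by
  calc |a + b + c + d| ≤ |a + b + c| + |d| := abs_add_le _ _
    _ ≤ |a + b| + |c| + |d| := by linarith [abs_add_le (a + b) c]
    _ ≤ |a| + |b| + |c| + |d| := by linarith [abs_add_le a b]

/-- The concatenation map `K₀ × K₀ → K₀` is continuous for the distance `K0dist`. -/
theorem stmt_11 :
    ∀ x y : ℝ≥0 × (ℝ≥0 → ℝ), IsK0 x → IsK0 y →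
      ∀ ε : ℝ, 0 < ε → ∃ δ : ℝ, 0 < δ ∧
        ∀ x' y' : ℝ≥0 × (ℝ≥0 → ℝ), IsK0 x' → IsK0 y' →
          K0dist x x' < δ → K0dist y y' < δ →
            K0dist (K0concat x y) (K0concat x' y') < ε := by
  rintro ⟨σ, f⟩ ⟨ρ, g⟩ ⟨hfc, hf0, hfσ⟩ ⟨hgc, hg0, hgρ⟩ ε hε
  simp only at hfc hf0 hfσ hgc hg0 hgρ
  set D : ℝ := ε / 6 with hD
  have hDpos : 0 < D := by positivity
  obtain ⟨δf, hδf, Hf⟩ := K0_unif f σ hfc hfσ D hDpos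
  obtain ⟨δg, hδg, Hg⟩ := K0_unif g ρ hgc hgρ D hDpos
  refine ⟨min (min δf δg) D, by positivity, ?_⟩
  set δ : ℝ := min (min δf δg) D with hδdef
  have hδf' : δ ≤ δf := (min_le_left _ _).trans (min_le_left _ _)
  have hδg' : δ ≤ δg := (min_le_left _ _).trans (min_le_right _ _)
  have hδD : δ ≤ D := min_le_right _ _
  rintro ⟨τ, f'⟩ ⟨ρ', g'⟩ ⟨hf'c, hf'0, hf'τ⟩ ⟨hg'c, hg'0, hg'ρ'⟩ hxd hyd
  simp only at hf'c hf'0 hf'τ hg'c hg'0 hg'ρ'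
  simp only [K0dist] at hxd hyd
  -- pointwise bounds for f vs f' and g vs g'
  have hsupf0 : (0 : ℝ) ≤ ⨆ t : ℝ≥0, |f t - f' t| := Real.iSup_nonneg fun t => abs_nonneg _
  have hsupg0 : (0 : ℝ) ≤ ⨆ t : ℝ≥0, |g t - g' t| := Real.iSup_nonneg fun t => abs_nonneg _
  have hστ : |(σ : ℝ) - τ| < δ := by linarith
  have hρρ' : |(ρ : ℝ) - ρ'| < δ := by linarith
  have hbf : BddAbove (Set.range fun t => |f t - f' t|) := by
    apply K0_bddAbove _ (σ ⊔ τ) (hfc.sub hf'c).abs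
    intro t ht
    simp only [Pi.sub_apply]
    rw [hfσ t (le_sup_left.trans ht), hf'τ t (le_sup_right.trans ht),
      hfσ (σ ⊔ τ) le_sup_left, hf'τ (σ ⊔ τ) le_sup_right]
  have hbg : BddAbove (Set.range fun t => |g t - g' t|) := by
    apply K0_bddAbove _ (ρ ⊔ ρ') (hgc.sub hg'c).abs
    intro t ht
    simp only [Pi.sub_apply]
    rw [hgρ t (le_sup_left.trans ht), hg'ρ' t (le_sup_right.trans ht),
      hgρ (ρ ⊔ ρ') le_sup_left, hg'ρ' (ρ ⊔ ρ') le_sup_right]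
  have hfp : ∀ s, |f s - f' s| < δ := fun s =>
    lt_of_le_of_lt (le_ciSup hbf s) (by linarith [abs_nonneg ((σ : ℝ) - τ)])
  have hgp : ∀ s, |g s - g' s| < δ := fun s =>
    lt_of_le_of_lt (le_ciSup hbg s) (by linarith [abs_nonneg ((ρ : ℝ) - ρ')])
  simp only [K0dist, K0concat]
  -- the pointwise bound on the concatenations
  have hpt : ∀ t : ℝ≥0,
      |(if t ≤ σ then f t else f σ + g (t - σ)) - (if t ≤ τ then f' t else f' τ + g' (t - τ))|
        ≤ 4 * D := by
    intro t
    by_cases h1 : t ≤ σ <;> by_cases h2 : t ≤ τ <;> simp only [h1, h2, if_true, if_false]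
    · -- t ≤ σ, t ≤ τ
      have := hfp t
      linarith
    · -- t ≤ σ, τ < t
      have hτt : τ ≤ t := le_of_not_ge h2
      have htσ : (t : ℝ) ≤ σ := NNReal.coe_le_coe.2 h1
      have hτσ : (τ : ℝ) - σ ≤ |(σ : ℝ) - τ| := by
        rw [abs_sub_comm]; linarith [le_abs_self ((τ : ℝ) - σ)]
      have hστ' : (σ : ℝ) - τ ≤ |(σ : ℝ) - τ| := le_abs_self _
      have hcoe : ((t - τ : ℝ≥0) : ℝ) = (t : ℝ) - τ := NNReal.coe_sub hτt
      have e1 : |f t - f τ| < D := by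
        apply Hf
        rw [abs_of_nonneg (by linarith [NNReal.coe_le_coe.2 hτt])]
        linarith
      have e2 : |f τ - f' τ| < D := lt_of_lt_of_le (hfp τ) hδD
      have e3 : |g (t - τ) - g' (t - τ)| < D := lt_of_lt_of_le (hgp _) hδD
      have e4 : |g (t - τ)| < D := by
        have harg : |((t - τ : ℝ≥0) : ℝ) - ((0 : ℝ≥0) : ℝ)| ≤ δg := by
          rw [hcoe, NNReal.coe_zero, sub_zero,
            abs_of_nonneg (by linarith [NNReal.coe_le_coe.2 hτt])]
          linarith
        have := Hg (t - τ) 0 harg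
        rwa [hg0, sub_zero] at this
      have key : f t - (f' τ + g' (t - τ)) =
          (f t - f τ) + (f τ - f' τ) + (g (t - τ) - g' (t - τ)) + (-(g (t - τ))) := by ring
      calc |f t - (f' τ + g' (t - τ))| = _ := by rw [key]
        _ ≤ |f t - f τ| + |f τ - f' τ| + |g (t - τ) - g' (t - τ)| + |(-(g (t - τ)))| :=
            abs_add_four _ _ _ _
        _ ≤ 4 * D := by rw [abs_neg]; linarith
    · -- σ < t, t ≤ τ
      have hσt : σ ≤ t := le_of_not_ge h1
      have htτ : (t : ℝ) ≤ τ := NNReal.coe_le_coe.2 h2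
      have hτσ : (τ : ℝ) - σ ≤ |(σ : ℝ) - τ| := by
        rw [abs_sub_comm]; linarith [le_abs_self ((τ : ℝ) - σ)]
      have hcoe : ((t - σ : ℝ≥0) : ℝ) = (t : ℝ) - σ := NNReal.coe_sub hσt
      have e1 : |f σ - f t| < D := by
        apply Hf
        rw [abs_sub_comm, abs_of_nonneg (by linarith [NNReal.coe_le_coe.2 hσt])]
        linarith
      have e2 : |f t - f' t| < D := lt_of_lt_of_le (hfp t) hδD
      have e3 : |g (t - σ)| < D := by
        have harg : |((t - σ : ℝ≥0) : ℝ) - ((0 : ℝ≥0) : ℝ)| ≤ δg := by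
          rw [hcoe, NNReal.coe_zero, sub_zero,
            abs_of_nonneg (by linarith [NNReal.coe_le_coe.2 hσt])]
          linarith
        have := Hg (t - σ) 0 harg
        rwa [hg0, sub_zero] at this
      have key : f σ + g (t - σ) - f' t =
          (f σ - f t) + (f t - f' t) + (g (t - σ)) + 0 := by ring
      calc |f σ + g (t - σ) - f' t| = _ := by rw [key]
        _ ≤ |f σ - f t| + |f t - f' t| + |g (t - σ)| + |(0 : ℝ)| := abs_add_four _ _ _ _
        _ ≤ 4 * D := by rw [abs_zero]; linarith
    · -- σ < t, τ < t
      have hσt : σ ≤ t := le_of_not_ge h1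
      have hτt : τ ≤ t := le_of_not_ge h2
      have hcoeσ : ((t - σ : ℝ≥0) : ℝ) = (t : ℝ) - σ := NNReal.coe_sub hσt
      have hcoeτ : ((t - τ : ℝ≥0) : ℝ) = (t : ℝ) - τ := NNReal.coe_sub hτt
      have e1 : |f σ - f τ| < D := Hf σ τ (by linarith)
      have e2 : |f τ - f' τ| < D := lt_of_lt_of_le (hfp τ) hδD
      have e3 : |g (t - σ) - g (t - τ)| < D := by
        apply Hg
        rw [hcoeσ, hcoeτ]
        have : (t : ℝ) - σ - ((t : ℝ) - τ) = (τ : ℝ) - σ := by ring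
        rw [this, abs_sub_comm]
        linarith
      have e4 : |g (t - τ) - g' (t - τ)| < D := lt_of_lt_of_le (hgp _) hδD
      have key : f σ + g (t - σ) - (f' τ + g' (t - τ)) =
          (f σ - f τ) + (f τ - f' τ) + (g (t - σ) - g (t - τ)) + (g (t - τ) - g' (t - τ)) := by
        ring
      calc |f σ + g (t - σ) - (f' τ + g' (t - τ))| = _ := by rw [key]
        _ ≤ _ := abs_add_four _ _ _ _
        _ ≤ 4 * D := by linarith
  have hsup : (⨆ t : ℝ≥0,
      |(if t ≤ σ then f t else f σ + g (t - σ)) - (if t ≤ τ then f' t else f' τ + g' (t - τ))|)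
        ≤ 4 * D := Real.iSup_le hpt (by positivity)
  have htri : |((σ + ρ : ℝ≥0) : ℝ) - ((τ + ρ' : ℝ≥0) : ℝ)| ≤ |(σ : ℝ) - τ| + |(ρ : ℝ) - ρ'| := by
    push_cast
    have : (σ : ℝ) + ρ - ((τ : ℝ) + ρ') = ((σ : ℝ) - τ) + ((ρ : ℝ) - ρ') := by ring
    rw [this]
    exact abs_add_le _ _
  have : δ ≤ D := hδD
  linarith
end
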